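/- arXiv:2007.13659 — 3 statements merged into one kernel-verified Lean document; each statement's English description precedes it below -/
import Mathlib

section
/- Under the stated assumptions, the parameter $\theta(\tau) = \int \frac{\partial m_0(x,q_\tau)}{\partial x_1} dF_X(x)$ satisfies the alternative representation $\theta(\tau) = -\int \omega(x) \, 1\{y \le q_\tau\} \, dF_{Y,X}(y,x)$, where $\omega(x) = \partial \log f_{X_1|X_{-1}=x_{-1}}(x_1)/\partial x_1$. -/
open MeasureTheory Filter


open Set Topology ENNReal

section ThetaAuxiliary

-- Section A: one-variable calculus facts

lemma auxA1 {h : ℝ → ℝ} (hi : Integrable h) (hc : Continuous h) (t : ℝ) :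
    HasDerivAt (fun u => ∫ x in Iic u, h x) (h t) t := by
  have key : (fun u => ∫ x in Iic u, h x)
      = fun u => (∫ x in Iic (0:ℝ), h x) + ∫ x in (0:ℝ)..u, h x := by
    funext u
    rw [← intervalIntegral.integral_Iic_sub_Iic hi.integrableOn hi.integrableOn]
    ring
  rw [key]
  exact (intervalIntegral.integral_hasDerivAt_right (hi.intervalIntegrable)
    (hc.stronglyMeasurable.stronglyMeasurableAtFilter) hc.continuousAt).const_add _

lemma auxA2top {h : ℝ → ℝ} (hi : Integrable h) :
    Tendsto (fun t => ∫ x in Iic t, h x) atTop (𝓝 (∫ x, h x)) := by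
  have : ∀ t : ℝ, ∫ x in Iic t, h x = ∫ x, (Iic t).indicator h x := by
    intro t; rw [integral_indicator measurableSet_Iic]
  simp_rw [this]
  refine tendsto_integral_filter_of_dominated_convergence (fun x => |h x|)
    (Eventually.of_forall fun t => (hi.aestronglyMeasurable.indicator measurableSet_Iic))
    (Eventually.of_forall fun t => Eventually.of_forall fun x => ?_)
    hi.abs (Eventually.of_forall fun x => ?_)
  · rw [Real.norm_eq_abs]
    rcases le_or_gt x t with hx | hx
    · rw [indicator_of_mem (mem_Iic.mpr hx)]
    · rw [indicator_of_notMem (by simpa using hx)]; simp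
  · refine tendsto_const_nhds.congr' ?_
    filter_upwards [eventually_ge_atTop x] with t ht
    rw [indicator_of_mem (mem_Iic.mpr ht)]

lemma auxA2bot {h : ℝ → ℝ} (hi : Integrable h) :
    Tendsto (fun t => ∫ x in Iic t, h x) atBot (𝓝 0) := by
  have : ∀ t : ℝ, ∫ x in Iic t, h x = ∫ x, (Iic t).indicator h x := by
    intro t; rw [integral_indicator measurableSet_Iic]
  simp_rw [this]
  have key := tendsto_integral_filter_of_dominated_convergence (μ := volume)
    (F := fun (t : ℝ) x => (Iic t).indicator h x) (f := fun _ => (0:ℝ)) (l := atBot)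
    (fun x => |h x|)
    (Eventually.of_forall fun t => (hi.aestronglyMeasurable.indicator measurableSet_Iic))
    (Eventually.of_forall fun t => Eventually.of_forall fun x => ?_)
    hi.abs (Eventually.of_forall fun x => ?_)
  · simpa using key
  · simp only [Real.norm_eq_abs]
    rcases le_or_gt x t with hx | hx
    · rw [indicator_of_mem (mem_Iic.mpr hx)]
    · rw [indicator_of_notMem (by simpa using hx)]; simp
  · refine tendsto_const_nhds.congr' ?_
    filter_upwards [eventually_lt_atBot x] with t ht
    rw [indicator_of_notMem (by simpa using not_le.mpr ht)]

lemma auxA3 {G G' : ℝ → ℝ} (hd : ∀ t, HasDerivAt G (G' t) t)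
    (hbot : Tendsto G atBot (𝓝 0)) (htop : Tendsto G atTop (𝓝 0)) :
    ∫ t, G' t = 0 := by
  by_cases hi : Integrable G'
  · have h1 : Tendsto (fun n : ℕ => ∫ x in (-(n:ℝ))..(n:ℝ), G' x) atTop (𝓝 (∫ t, G' t)) :=
      intervalIntegral_tendsto_integral hi
        (tendsto_neg_atBot_iff.mpr tendsto_natCast_atTop_atTop) tendsto_natCast_atTop_atTop
    have h2 : ∀ n : ℕ, ∫ x in (-(n:ℝ))..(n:ℝ), G' x = G n - G (-(n:ℝ)) := fun n =>
      intervalIntegral.integral_eq_sub_of_hasDerivAt (fun x _ => hd x) hi.intervalIntegrable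
    simp_rw [h2] at h1
    have h3 : Tendsto (fun n : ℕ => G n - G (-(n:ℝ))) atTop (𝓝 (0 - 0)) :=
      (htop.comp tendsto_natCast_atTop_atTop).sub
        (hbot.comp (tendsto_neg_atBot_iff.mpr tendsto_natCast_atTop_atTop))
    rw [sub_zero] at h3
    exact tendsto_nhds_unique h1 h3
  · exact integral_undef hi

lemma auxInt {h : ℝ → ℝ} (hne : ∫ x, h x ≠ 0) : Integrable h := by
  by_contra hi; exact hne (integral_undef hi)

lemma auxB (ϕ : ℝ → ℝ) (hϕd : ContDiff ℝ 1 ϕ) (hϕpos : ∀ t, 0 < ϕ t)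
    (hϕtop : Tendsto ϕ atTop (𝓝 0)) (hϕbot : Tendsto ϕ atBot (𝓝 0))
    (hϕ1 : ∫ t, ϕ t = 1)
    (m : ℝ → ℝ) (hmd : ContDiff ℝ 1 m) (hm0 : ∀ t, 0 ≤ m t) (hm1 : ∀ t, m t ≤ 1)
    (hdint : Integrable (fun t => deriv m t * ϕ t)) :
    ∫ t, (deriv (fun u => Real.log (ϕ u)) t * m t + (∫ s, deriv m s * ϕ s)) * ϕ t = 0 := by
  have hϕint : Integrable ϕ := auxInt (by rw [hϕ1]; exact one_ne_zero)
  have hϕc : Continuous ϕ := hϕd.continuous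
  have hϕ'c : Continuous (deriv ϕ) := hϕd.continuous_deriv le_rfl
  have hd_cont : Continuous (deriv m) := hmd.continuous_deriv le_rfl
  set T₁ : ℝ := ∫ s, deriv m s * ϕ s with hT₁
  set h : ℝ → ℝ := fun t => T₁ * ϕ t - deriv m t * ϕ t with hh
  have hh_int : Integrable h := (hϕint.const_mul T₁).sub hdint
  have hh_cont : Continuous h :=
    (continuous_const.mul hϕc).sub (hd_cont.mul hϕc)
  have hinth : ∫ t, h t = 0 := by
    rw [integral_sub (hϕint.const_mul T₁) hdint, integral_const_mul, hϕ1, mul_one,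
      sub_self]
  set ψ : ℝ → ℝ := fun t => ∫ x in Iic t, h x with hψ
  have hψd : ∀ t, HasDerivAt ψ (h t) t := fun t => auxA1 hh_int hh_cont t
  have hψtop : Tendsto ψ atTop (𝓝 0) := by
    have := auxA2top hh_int; rwa [hinth] at this
  have hψbot : Tendsto ψ atBot (𝓝 0) := auxA2bot hh_int
  set G : ℝ → ℝ := fun t => m t * ϕ t + ψ t with hG
  have hGd : ∀ t, HasDerivAt G (deriv m t * ϕ t + m t * deriv ϕ t + h t) t := fun t =>
    (((hmd.differentiable one_ne_zero t).hasDerivAt.mul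
      (hϕd.differentiable one_ne_zero t).hasDerivAt)).add (hψd t)
  have hmϕtop : Tendsto (fun t => m t * ϕ t) atTop (𝓝 0) :=
    tendsto_of_tendsto_of_tendsto_of_le_of_le tendsto_const_nhds hϕtop
      (fun t => mul_nonneg (hm0 t) (hϕpos t).le)
      (fun t => mul_le_of_le_one_left (hϕpos t).le (hm1 t))
  have hmϕbot : Tendsto (fun t => m t * ϕ t) atBot (𝓝 0) :=
    tendsto_of_tendsto_of_tendsto_of_le_of_le tendsto_const_nhds hϕbot
      (fun t => mul_nonneg (hm0 t) (hϕpos t).le)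
      (fun t => mul_le_of_le_one_left (hϕpos t).le (hm1 t))
  have hGtop : Tendsto G atTop (𝓝 0) := by
    have := hmϕtop.add hψtop; simpa using this
  have hGbot : Tendsto G atBot (𝓝 0) := by
    have := hmϕbot.add hψbot; simpa using this
  have hlog : ∀ t, deriv (fun u => Real.log (ϕ u)) t = (ϕ t)⁻¹ * deriv ϕ t := by
    intro t
    exact ((Real.hasDerivAt_log (hϕpos t).ne').comp t
      (hϕd.differentiable one_ne_zero t).hasDerivAt).deriv
  have heq : (fun t => (deriv (fun u => Real.log (ϕ u)) t * m t + T₁) * ϕ t)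
      = fun t => deriv m t * ϕ t + m t * deriv ϕ t + h t := by
    funext t
    rw [hlog t, hh]
    have hne : ϕ t ≠ 0 := (hϕpos t).ne'
    field_simp
    ring
  rw [heq]
  exact auxA3 hGd hGbot hGtop

lemma auxL {u : ℕ → ℝ≥0∞} {a : ℝ≥0∞} (h : Tendsto u atTop (𝓝 a)) :
    (⨅ n, ⨆ m, u (n + m)) = a := by
  refine le_antisymm ?_ (le_iInf fun n => ?_)
  · by_contra hc
    push_neg at hc
    obtain ⟨c, hac, hci⟩ := exists_between hc
    obtain ⟨N, hN⟩ := eventually_atTop.mp (h.eventually (gt_mem_nhds hac))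
    have hle : (⨅ n, ⨆ m, u (n + m)) ≤ c :=
      le_trans (iInf_le _ N) (iSup_le fun m => (hN (N + m) (Nat.le_add_right N m)).le)
    exact absurd hle (not_le.mpr hci)
  · by_contra hc
    push_neg at hc
    obtain ⟨k, hsk, hk⟩ := ((h.eventually (Ioi_mem_nhds hc)).and (eventually_ge_atTop n)).exists
    have : u k ≤ ⨆ m, u (n + m) := by
      have hkeq : n + (k - n) = k := Nat.add_sub_cancel' hk
      calc u k = u (n + (k - n)) := by rw [hkeq]
        _ ≤ ⨆ m, u (n + m) := le_iSup (fun m => u (n + m)) (k - n)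
    exact absurd (lt_of_lt_of_le hsk this) (lt_irrefl _)

lemma auxSlope {g : ℝ → ℝ} {x d : ℝ} (hg : HasDerivAt g d x) :
    Tendsto (fun n : ℕ => ((n:ℝ)+1) * (g (x + 1/((n:ℝ)+1)) - g x)) atTop (𝓝 d) := by
  have h1 := hasDerivAt_iff_tendsto_slope.mp hg
  have h2 : Tendsto (fun n : ℕ => x + 1/((n:ℝ)+1)) atTop (𝓝[≠] x) := by
    refine tendsto_nhdsWithin_of_tendsto_nhds_of_eventually_within _ ?_ ?_
    · have h3 : Tendsto (fun n : ℕ => 1/((n:ℝ)+1)) atTop (𝓝 0) :=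
        tendsto_one_div_add_atTop_nhds_zero_nat
      have h5 : Tendsto (fun n : ℕ => x + 1/((n:ℝ)+1)) atTop (𝓝 (x + 0)) :=
        (tendsto_const_nhds (x := x) (f := atTop)).add h3
      simpa using h5
    · refine Eventually.of_forall fun n => ?_
      have hpos : (0:ℝ) < 1/((n:ℝ)+1) := by positivity
      simp only [mem_compl_iff, mem_singleton_iff]
      intro hcontra
      nlinarith [hcontra]
  have h4 := h1.comp h2
  refine h4.congr fun n => ?_
  simp only [Function.comp_apply, slope_def_field]
  have hpos : (0:ℝ) < 1/((n:ℝ)+1) := by positivity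
  field_simp
  ring

lemma auxTerm {ϕ : ℝ → ℝ} (hi : Integrable ϕ) (hc : Continuous ϕ) (x : ℝ) :
    Tendsto (fun n : ℕ => ((n:ℝ)+1) *
      ∫ s in ((⌈(((n:ℝ)+1) * x)⌉ : ℝ)/((n:ℝ)+1))..((⌈(((n:ℝ)+1) * x)⌉ : ℝ)/((n:ℝ)+1) + 1/((n:ℝ)+1)),
        ϕ s) atTop (𝓝 (ϕ x)) := by
  rw [Metric.tendsto_atTop]
  intro ε hε
  obtain ⟨δ, hδ, hδ'⟩ := Metric.continuousAt_iff.mp hc.continuousAt (ε/2) (by positivity)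
  obtain ⟨N, hN⟩ := exists_nat_gt (2/δ)
  refine ⟨N, fun n hn => ?_⟩
  have hnn : (0:ℝ) < (n:ℝ) + 1 := by positivity
  set nn : ℝ := (n:ℝ) + 1 with hnndef
  have h2δ : 2/nn < δ := by
    have h1 : 2/δ < nn := by
      have h2 : (N:ℝ) ≤ (n:ℝ) := Nat.cast_le.mpr hn
      rw [hnndef]; linarith
    rw [div_lt_iff₀ hδ] at h1
    rw [div_lt_iff₀ hnn]
    linarith
  set a : ℝ := (⌈nn * x⌉ : ℝ)/nn with hadef
  set b : ℝ := a + 1/nn with hbdef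
  have hxa : x ≤ a := by
    have h5 := Int.le_ceil (nn * x)
    rw [hadef, le_div_iff₀ hnn]
    linarith
  have hab : a ≤ b := by rw [hbdef]; nlinarith [one_div_pos.mpr hnn]
  have hax : a < x + 1/nn := by
    rw [hadef, div_lt_iff₀ hnn]
    have h4 : (x + 1/nn) * nn = nn * x + 1 := by field_simp
    rw [h4]
    exact Int.ceil_lt_add_one _
  have hbx : b ≤ x + 2/nn := by
    rw [hbdef]
    have : (2:ℝ)/nn = 1/nn + 1/nn := by ring
    rw [this]
    linarith
  have hIab : IntervalIntegrable ϕ volume a b := hi.intervalIntegrable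
  have hsub : ∫ s in a..b, (ϕ s - ϕ x) = (∫ s in a..b, ϕ s) - (b - a) * ϕ x := by
    rw [intervalIntegral.integral_sub hIab (intervalIntegrable_const)]
    rw [intervalIntegral.integral_const, smul_eq_mul]
  have hba : b - a = 1/nn := by rw [hbdef]; ring
  have key : nn * (∫ s in a..b, ϕ s) - ϕ x = nn * ∫ s in a..b, (ϕ s - ϕ x) := by
    rw [hsub, hba]
    field_simp
  have hbound : ‖∫ s in a..b, (ϕ s - ϕ x)‖ ≤ (ε/2) * |b - a| := by
    refine intervalIntegral.norm_integral_le_of_norm_le_const fun y hy => ?_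
    rw [uIoc_of_le hab] at hy
    obtain ⟨hy1, hy2⟩ := hy
    have hyd : dist y x < δ := by
      rw [Real.dist_eq, abs_lt]
      have h7 : y ≤ x + 2/nn := le_trans hy2 hbx
      refine ⟨by linarith, by linarith⟩
    have := hδ' hyd
    rw [Real.dist_eq] at this
    rw [Real.norm_eq_abs]
    exact this.le
  rw [Real.dist_eq, key, abs_mul, abs_of_pos hnn]
  have h6 : |b - a| = 1/nn := by rw [hba]; exact abs_of_pos (by positivity)
  rw [h6] at hbound
  calc nn * |∫ s in a..b, (ϕ s - ϕ x)| ≤ nn * ((ε/2) * (1/nn)) := by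
        refine mul_le_mul_of_nonneg_left ?_ hnn.le
        simpa [Real.norm_eq_abs] using hbound
    _ = ε/2 := by field_simp
    _ < ε := by linarith

lemma auxC {E : Type*} [MeasurableSpace E] (ν : Measure E)
    (f : E → ℝ → ℝ) (hf_pos : ∀ x₂ x₁, 0 < f x₂ x₁) (hf_diff : ∀ x₂, ContDiff ℝ 1 (f x₂))
    (hf_int : ∀ x₂, Integrable (f x₂))
    (haesm : ∀ q : ℚ, AEStronglyMeasurable (fun x₂ => ∫ x₁ in Iic (q:ℝ), f x₂ x₁) ν) :
    ∃ (w : ℝ × E → ℝ) (N : Set E), Measurable w ∧ MeasurableSet N ∧ ν N = 0 ∧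
      ∀ x₂ ∉ N, ∀ x₁, w (x₁, x₂) = deriv (fun t => Real.log (f x₂ t)) x₁ := by
  classical
  have h1 : ∀ q : ℚ, ∃ (φ : E → ℝ) (Nq : Set E), Measurable φ ∧ MeasurableSet Nq ∧ ν Nq = 0 ∧
      ∀ x₂ ∉ Nq, φ x₂ = ∫ x₁ in Iic (q:ℝ), f x₂ x₁ := by
    intro q
    obtain ⟨Nq, hsub, hm, h0⟩ :=
      exists_measurable_superset_of_null (ae_iff.mp (haesm q).ae_eq_mk)
    refine ⟨(haesm q).mk _, Nq, (haesm q).stronglyMeasurable_mk.measurable, hm, h0, ?_⟩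
    intro x₂ hx₂
    by_contra hne
    exact hx₂ (hsub (by simp only [mem_setOf_eq]; exact fun h => hne h.symm))
  choose φ Nq hφm hNqm hNq0 hφeq using h1
  set N : Set E := ⋃ q : ℚ, Nq q with hNdef
  have hNm : MeasurableSet N := MeasurableSet.iUnion fun q => hNqm q
  have hN0 : ν N = 0 := measure_iUnion_null fun q => hNq0 q
  have hgood : ∀ x₂ ∉ N, ∀ q : ℚ, φ q x₂ = ∫ x₁ in Iic (q:ℝ), f x₂ x₁ := by
    intro x₂ hx₂ q
    exact hφeq q x₂ fun h => hx₂ (mem_iUnion.mpr ⟨q, h⟩)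
  -- rational grid points
  set qq : ℤ → ℕ → ℚ := fun k n => (k : ℚ)/((n:ℚ)+1) with hqq
  -- approximating sequence for the density
  set u : ℕ → ℝ × E → ℝ≥0∞ := fun n p => ENNReal.ofReal (((n:ℝ)+1) *
      (φ (qq (⌈(((n:ℝ)+1) * p.1)⌉ + 1) n) p.2 - φ (qq (⌈(((n:ℝ)+1) * p.1)⌉) n) p.2)) with hu
  have humeas : ∀ n, Measurable (u n) := by
    intro n
    have hD : Measurable (fun q : E × ℤ => φ (qq (q.2 + 1) n) q.1 - φ (qq q.2 n) q.1) := by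
      refine measurable_from_prod_countable_left fun k => ?_
      exact (hφm (qq (k + 1) n)).sub (hφm (qq k n))
    have hc : Measurable (fun p : ℝ × E => (p.2, ⌈(((n:ℝ)+1) * p.1)⌉)) :=
      measurable_snd.prodMk (Int.measurable_ceil.comp (measurable_fst.const_mul _))
    exact ENNReal.measurable_ofReal.comp ((hD.comp hc).const_mul _)
  set fE : ℝ × E → ℝ≥0∞ := fun p => ⨅ i, ⨆ m, u (i + m) p with hfE
  have hfEmeas : Measurable fE :=
    Measurable.iInf fun i => Measurable.iSup fun m => humeas (i + m)
  set ftil : ℝ × E → ℝ := fun p => (fE p).toReal with hftil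
  have hftilmeas : Measurable ftil := hfEmeas.ennreal_toReal
  have hstep1 : ∀ x₂ ∉ N, ∀ x₁, ftil (x₁, x₂) = f x₂ x₁ := by
    intro x₂ hx₂ x₁
    have hterm : ∀ n : ℕ, u n (x₁, x₂) = ENNReal.ofReal (((n:ℝ)+1) *
        ∫ s in ((⌈(((n:ℝ)+1) * x₁)⌉ : ℝ)/((n:ℝ)+1))..((⌈(((n:ℝ)+1) * x₁)⌉ : ℝ)/((n:ℝ)+1)
          + 1/((n:ℝ)+1)), f x₂ s) := by
      intro n
      set k : ℤ := ⌈(((n:ℝ)+1) * x₁)⌉ with hk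
      have hA : ((qq k n : ℚ) : ℝ) = (k : ℝ)/((n:ℝ)+1) := by
        rw [hqq]; push_cast; ring
      have hB : ((qq (k+1) n : ℚ) : ℝ) = (k : ℝ)/((n:ℝ)+1) + 1/((n:ℝ)+1) := by
        rw [hqq]; push_cast
        have hnn : ((n:ℝ)+1) ≠ 0 := by positivity
        field_simp
      have hint := intervalIntegral.integral_Iic_sub_Iic
        (hf_int x₂).integrableOn (hf_int x₂).integrableOn
        (a := (k : ℝ)/((n:ℝ)+1)) (b := (k : ℝ)/((n:ℝ)+1) + 1/((n:ℝ)+1))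
      rw [hu]
      simp only
      rw [hgood x₂ hx₂ (qq (k+1) n), hgood x₂ hx₂ (qq k n), hA, hB, hint]
    have htend : Tendsto (fun n => u n (x₁, x₂)) atTop (𝓝 (ENNReal.ofReal (f x₂ x₁))) := by
      simp only [hterm]
      exact ENNReal.tendsto_ofReal (auxTerm (hf_int x₂) (hf_diff x₂).continuous x₁)
    have : fE (x₁, x₂) = ENNReal.ofReal (f x₂ x₁) := auxL htend
    rw [hftil]
    simp only [this]
    exact ENNReal.toReal_ofReal (hf_pos x₂ x₁).le
  -- approximating sequence for the score
  set v : ℕ → ℝ × E → ℝ≥0∞ := fun n p => ENNReal.ofReal (Real.exp (((n:ℝ)+1) *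
      (Real.log (ftil (p.1 + 1/((n:ℝ)+1), p.2)) - Real.log (ftil p)))) with hv
  have hvmeas : ∀ n, Measurable (v n) := by
    intro n
    refine ENNReal.measurable_ofReal.comp (Real.measurable_exp.comp (Measurable.const_mul ?_ _))
    exact (Real.measurable_log.comp (hftilmeas.comp
      ((measurable_fst.add_const _).prodMk measurable_snd))).sub
      (Real.measurable_log.comp hftilmeas)
  set wE : ℝ × E → ℝ≥0∞ := fun p => ⨅ i, ⨆ m, v (i + m) p with hwE
  have hwEmeas : Measurable wE :=
    Measurable.iInf fun i => Measurable.iSup fun m => hvmeas (i + m)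
  refine ⟨fun p => Real.log (wE p).toReal, N, Real.measurable_log.comp hwEmeas.ennreal_toReal,
    hNm, hN0, ?_⟩
  intro x₂ hx₂ x₁
  set L : ℝ → ℝ := fun t => Real.log (f x₂ t) with hL
  set d : ℝ := (f x₂ x₁)⁻¹ * deriv (f x₂) x₁ with hd
  have hLd : HasDerivAt L d x₁ :=
    (Real.hasDerivAt_log (hf_pos x₂ x₁).ne').comp x₁
      ((hf_diff x₂).differentiable one_ne_zero x₁).hasDerivAt
  have hveq : ∀ n : ℕ, v n (x₁, x₂) =
      ENNReal.ofReal (Real.exp (((n:ℝ)+1) * (L (x₁ + 1/((n:ℝ)+1)) - L x₁))) := by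
    intro n
    rw [hv]
    simp only
    rw [hstep1 x₂ hx₂ (x₁ + 1/((n:ℝ)+1)), hstep1 x₂ hx₂ x₁]
  have htend : Tendsto (fun n => v n (x₁, x₂)) atTop (𝓝 (ENNReal.ofReal (Real.exp d))) := by
    simp only [hveq]
    have h8 : Tendsto (fun n : ℕ => Real.exp (((n:ℝ)+1) * (L (x₁ + 1/((n:ℝ)+1)) - L x₁)))
        atTop (𝓝 (Real.exp d)) := by
      have := (Real.continuous_exp.continuousAt (x := d)).tendsto.comp (auxSlope hLd)
      exact this
    exact ENNReal.tendsto_ofReal h8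
  have hwEval : wE (x₁, x₂) = ENNReal.ofReal (Real.exp d) := auxL htend
  have hderiv : deriv (fun t => Real.log (f x₂ t)) x₁ = d := hLd.deriv
  show Real.log (wE (x₁, x₂)).toReal = deriv (fun t => Real.log (f x₂ t)) x₁
  rw [hwEval, hderiv, ENNReal.toReal_ofReal (Real.exp_pos d).le, Real.log_exp]

end ThetaAuxiliary

/-- alternative representation of `θ(τ)`.
`(Y, X)` with `X = (X₁, X₋₁)` valued in `ℝ × E`.  Conditional on `X₋₁ = x₂`,
`X₁` has a positive continuously differentiable density `f x₂` vanishing at the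
boundary of its support (all of `ℝ`); the distribution of `X` is represented by
`hX_dist`.  `m₀ (x, q) = P(Y ≤ q ∣ X = x)` (hypothesis `hcond`), differentiable
in `x₁` with bounded derivative, and `ω` is the score.  Then
`θ(τ) = ∫ ∂_{x₁} m₀(x, q_τ) dF_X(x) = -∫ ω(x) 1{y ≤ q_τ} dF_{Y,X}(y, x)`. -/
theorem theta_alternative_representation
    {Ω E : Type*} [MeasurableSpace Ω] [MeasurableSpace E]
    (P : Measure Ω) [IsProbabilityMeasure P]
    (Y : Ω → ℝ) (X : Ω → ℝ × E) (hY : Measurable Y) (hX : Measurable X)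
    (ν : Measure E) [IsProbabilityMeasure ν]
    (f : E → ℝ → ℝ)
    (hf_pos : ∀ x₂ x₁, 0 < f x₂ x₁)
    (hf_diff : ∀ x₂, ContDiff ℝ 1 (f x₂))
    (hf_density : ∀ x₂, ∫ x₁, f x₂ x₁ = 1)
    (hf_vanish_top : ∀ x₂, Tendsto (f x₂) atTop (nhds 0))
    (hf_vanish_bot : ∀ x₂, Tendsto (f x₂) atBot (nhds 0))
    -- the distribution of X has conditional density f w.r.t. ν:
    (hX_dist : ∀ g : ℝ × E → ℝ, Integrable (g ∘ X) P →
      ∫ a, g (X a) ∂P = ∫ x₂, (∫ x₁, g (x₁, x₂) * f x₂ x₁) ∂ν)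
    (ω : ℝ × E → ℝ)
    (hω : ∀ x₁ x₂, ω (x₁, x₂) = deriv (fun t => Real.log (f x₂ t)) x₁)
    (qτ : ℝ)
    (m₀ : ℝ × E → ℝ)
    -- m₀(·, qτ) is the conditional CDF of Y given X evaluated at qτ:
    (hcond : (P[fun a => Set.indicator (Set.Iic qτ) (fun _ => (1 : ℝ)) (Y a)
        | MeasurableSpace.comap X inferInstance]) =ᵐ[P] fun a => m₀ (X a))
    (hm₀_diff : ∀ x₂, ContDiff ℝ 1 (fun t => m₀ (t, x₂)))
    (hm₀_bdd : ∀ x, 0 ≤ m₀ x ∧ m₀ x ≤ 1)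
    (hm₀_deriv_bdd : ∃ C, ∀ x₂ x₁, |deriv (fun t => m₀ (t, x₂)) x₁| ≤ C)
    -- sufficient integrability so that all integrals are finite
    (hint1 : Integrable (fun a => ω (X a) *
        Set.indicator (Set.Iic qτ) (fun _ => (1 : ℝ)) (Y a)) P)
    (hint2 : ∀ x₂, Integrable (fun x₁ => deriv (fun t => m₀ (t, x₂)) x₁ * f x₂ x₁))
    (hint3 : Integrable (fun x₂ => ∫ x₁, deriv (fun t => m₀ (t, x₂)) x₁ * f x₂ x₁) ν)
    (hint4 : Integrable (fun a => ω (X a) * m₀ (X a)) P) :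
    ∫ x₂, (∫ x₁, deriv (fun t => m₀ (t, x₂)) x₁ * f x₂ x₁) ∂ν
      = - ∫ a, ω (X a) * Set.indicator (Set.Iic qτ) (fun _ => (1 : ℝ)) (Y a) ∂P := by
  classical
  have hm : MeasurableSpace.comap X inferInstance ≤ ‹MeasurableSpace Ω› := hX.comap_le
  set Z : Ω → ℝ := fun a => Set.indicator (Set.Iic qτ) (fun _ => (1 : ℝ)) (Y a) with hZdef
  -- integrability of the indicator
  have hZint : Integrable Z P := by
    have heq : Z = (Y ⁻¹' (Set.Iic qτ)).indicator (fun _ => (1:ℝ)) := by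
      funext a
      by_cases h : Y a ≤ qτ
      · simp [hZdef, Set.indicator_apply, h, Set.mem_Iic]
      · simp [hZdef, Set.indicator_apply, h, Set.mem_Iic]
    rw [heq]
    exact (integrable_const (1:ℝ)).indicator (hY measurableSet_Iic)
  -- each conditional density is integrable
  have hfint : ∀ x₂, Integrable (f x₂) := fun x₂ =>
    auxInt (by rw [hf_density x₂]; exact one_ne_zero)
  -- ν-null sets pull back to P-null sets through X₂
  have hnull : ∀ N' : Set E, MeasurableSet N' → ν N' = 0 → P {a | (X a).2 ∈ N'} = 0 := by
    intro N' hm' h0'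
    set g : ℝ × E → ℝ := fun x => if x.2 ∈ N' then (1:ℝ) else 0 with hg
    have hmeasset : MeasurableSet {a | (X a).2 ∈ N'} := (measurable_snd.comp hX) hm'
    have hgX : (fun a => g (X a)) = {a | (X a).2 ∈ N'}.indicator (fun _ => (1:ℝ)) := by
      funext a
      by_cases h : (X a).2 ∈ N' <;> simp [hg, Set.indicator_apply, h]
    have hgint : Integrable (g ∘ X) P := by
      have : Integrable (fun a => g (X a)) P := by
        rw [hgX]; exact (integrable_const (1:ℝ)).indicator hmeasset
      exact this
    have happ := hX_dist g hgint
    have hL : ∫ a, g (X a) ∂P = (P {a | (X a).2 ∈ N'}).toReal := by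
      rw [hgX, integral_indicator_const (1:ℝ) hmeasset, smul_eq_mul, mul_one, measureReal_def]
    have hR : (fun x₂ => ∫ x₁, g (x₁, x₂) * f x₂ x₁) = N'.indicator (fun _ => (1:ℝ)) := by
      funext x₂
      by_cases h : x₂ ∈ N'
      · simp only [hg, h, if_true, one_mul, Set.indicator_apply, if_pos h]
        exact hf_density x₂
      · simp [hg, h, Set.indicator_apply]
    rw [hL, hR, integral_indicator_const (1:ℝ) hm', measureReal_def, h0'] at happ
    simp only [ENNReal.toReal_zero, zero_smul] at happ
    have hfin : P {a | (X a).2 ∈ N'} ≠ ⊤ := measure_ne_top P _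
    rw [ENNReal.toReal_eq_zero_iff] at happ
    tauto
  -- the rational CDFs are a.e. strongly measurable
  have haesm : ∀ q : ℚ, AEStronglyMeasurable (fun x₂ => ∫ x₁ in Iic (q:ℝ), f x₂ x₁) ν := by
    intro q
    by_contra hna
    set F : E → ℝ := fun x₂ => ∫ x₁ in Iic (q:ℝ), f x₂ x₁ with hF
    set g : ℝ × E → ℝ := fun x => if x.1 ≤ (q:ℝ) then (1:ℝ) else 0 with hg
    have hgX : (fun a => g (X a)) = {a | (X a).1 ≤ (q:ℝ)}.indicator (fun _ => (1:ℝ)) := by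
      funext a
      by_cases h : (X a).1 ≤ (q:ℝ) <;> simp [hg, Set.indicator_apply, h]
    have hmeasset : MeasurableSet {a | (X a).1 ≤ (q:ℝ)} :=
      (measurable_fst.comp hX) measurableSet_Iic
    have hgint : Integrable (g ∘ X) P := by
      have : Integrable (fun a => g (X a)) P := by
        rw [hgX]; exact (integrable_const (1:ℝ)).indicator hmeasset
      exact this
    have hitef : ∀ x₂, (fun x₁ => g (x₁, x₂) * f x₂ x₁) = (Iic (q:ℝ)).indicator (f x₂) := by
      intro x₂
      funext x₁
      by_cases h : x₁ ≤ (q:ℝ) <;> simp [hg, Set.indicator_apply, h, Set.mem_Iic]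
    have hinner : ∀ x₂, ∫ x₁, g (x₁, x₂) * f x₂ x₁ = F x₂ := by
      intro x₂
      rw [hitef x₂, integral_indicator measurableSet_Iic]
    have h1 := hX_dist g hgint
    simp_rw [hinner] at h1
    set g' : ℝ × E → ℝ := fun x => 1 - g x with hg'
    have hg'int : Integrable (g' ∘ X) P := by
      have : Integrable (fun a => 1 - g (X a)) P := (integrable_const (1:ℝ)).sub hgint
      exact this
    have hinner' : ∀ x₂, ∫ x₁, g' (x₁, x₂) * f x₂ x₁ = 1 - F x₂ := by
      intro x₂
      have hsplit : (fun x₁ => g' (x₁, x₂) * f x₂ x₁)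
          = fun x₁ => f x₂ x₁ - g (x₁, x₂) * f x₂ x₁ := by
        funext x₁; rw [hg']; ring
      rw [hsplit]
      have hgfint : Integrable (fun x₁ => g (x₁, x₂) * f x₂ x₁) := by
        rw [hitef x₂]; exact (hfint x₂).indicator measurableSet_Iic
      rw [integral_sub (hfint x₂) hgfint, hf_density x₂, hinner x₂]
    have h2 := hX_dist g' hg'int
    simp_rw [hinner'] at h2
    -- both right-hand sides are junk 0
    have hnaF : ¬ Integrable F ν := fun h => hna h.aestronglyMeasurable
    have hnaF' : ¬ Integrable (fun x₂ => 1 - F x₂) ν := by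
      intro h
      refine hna ?_
      have h5 := (aestronglyMeasurable_const (b := (1:ℝ))).sub h.aestronglyMeasurable
      have h6 : (fun x₂ => (1:ℝ) - (1 - F x₂)) = F := by funext x₂; ring
      rw [← h6]
      exact h5
    rw [integral_undef hnaF] at h1
    rw [integral_undef hnaF'] at h2
    have hsum : ∫ a, g (X a) ∂P + ∫ a, g' (X a) ∂P = 1 := by
      have : ∫ a, g' (X a) ∂P = 1 - ∫ a, g (X a) ∂P := by
        have hone : ∫ (_ : Ω), (1:ℝ) ∂P = 1 := by simp
        have := integral_sub (integrable_const (1:ℝ)) hgint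
        simp only [Function.comp] at this
        rw [hg']
        simp only
        rw [this, hone]
      rw [this]; ring
    rw [h1, h2] at hsum
    norm_num at hsum
  -- measurable version of the score
  obtain ⟨w, N, hwm, hNm, hN0, hweq⟩ := auxC ν f hf_pos hf_diff hfint haesm
  have hXN : P {a | (X a).2 ∈ N} = 0 := hnull N hNm hN0
  have hωae : (fun a => w (X a)) =ᵐ[P] fun a => ω (X a) := by
    rw [Filter.EventuallyEq, ae_iff]
    refine measure_mono_null ?_ hXN
    intro a ha
    simp only [mem_setOf_eq] at ha ⊢
    by_contra hmem
    apply ha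
    have h := hweq (X a).2 hmem (X a).1
    rw [← hω (X a).1 (X a).2] at h
    simpa using h
  -- T₁ : the inner integral, as a function of x₂
  set T₁ : E → ℝ := fun x₂ => ∫ x₁, deriv (fun t => m₀ (t, x₂)) x₁ * f x₂ x₁ with hT₁def
  obtain ⟨C, hC⟩ := hm₀_deriv_bdd
  set C₀ : ℝ := max C 0 with hC₀def
  have hC₀nonneg : 0 ≤ C₀ := le_max_right _ _
  have hC' : ∀ x₂ x₁, |deriv (fun t => m₀ (t, x₂)) x₁| ≤ C₀ :=
    fun x₂ x₁ => le_trans (hC x₂ x₁) (le_max_left _ _)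
  have hT₁bdd : ∀ x₂, |T₁ x₂| ≤ C₀ := by
    intro x₂
    have h1 : |T₁ x₂| ≤ ∫ x₁, |deriv (fun t => m₀ (t, x₂)) x₁ * f x₂ x₁| := by
      rw [hT₁def]
      have h1' := norm_integral_le_integral_norm (μ := volume)
        (fun x₁ => deriv (fun t => m₀ (t, x₂)) x₁ * f x₂ x₁)
      simp only [Real.norm_eq_abs] at h1'
      exact h1'
    have h2 : ∫ x₁, |deriv (fun t => m₀ (t, x₂)) x₁ * f x₂ x₁| ≤ ∫ x₁, C₀ * f x₂ x₁ := by
      refine integral_mono (hint2 x₂).abs ((hfint x₂).const_mul C₀) fun x₁ => ?_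
      rw [abs_mul, abs_of_pos (hf_pos x₂ x₁)]
      exact mul_le_mul_of_nonneg_right (hC' x₂ x₁) (hf_pos x₂ x₁).le
    have h3 : ∫ x₁, C₀ * f x₂ x₁ = C₀ := by
      rw [integral_const_mul, hf_density x₂, mul_one]
    linarith
  -- integrability of T₁ ∘ X₂
  have hT₁X : Integrable (fun a => T₁ (X a).2) P := by
    obtain ⟨N₂, hsub₂, hm₂, h0₂⟩ :=
      exists_measurable_superset_of_null (ae_iff.mp hint3.aestronglyMeasurable.ae_eq_mk)
    set τ : E → ℝ := fun x₂ => max (-C₀) (min C₀ (hint3.aestronglyMeasurable.mk _ x₂)) with hτ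
    have hτm : Measurable τ :=
      (measurable_const.max (measurable_const.min
        hint3.aestronglyMeasurable.stronglyMeasurable_mk.measurable))
    have hτbdd : ∀ x₂, ‖τ x₂‖ ≤ C₀ := by
      intro x₂
      rw [Real.norm_eq_abs, abs_le]
      constructor
      · exact le_max_left _ _
      · exact max_le (by linarith) (min_le_left _ _)
    have hτeq : ∀ x₂ ∉ N₂, τ x₂ = T₁ x₂ := by
      intro x₂ hx₂
      have hmk : T₁ x₂ = hint3.aestronglyMeasurable.mk _ x₂ := by
        by_contra hne
        exact hx₂ (hsub₂ (by simp only [mem_setOf_eq]; exact hne))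
      have habs := abs_le.mp (hT₁bdd x₂)
      rw [hτ]
      simp only
      rw [← hmk, min_eq_right habs.2, max_eq_right habs.1]
    have hτXint : Integrable (fun a => τ (X a).2) P := by
      refine Integrable.mono' (integrable_const C₀)
        ((hτm.comp (measurable_snd.comp hX)).aestronglyMeasurable) ?_
      exact Eventually.of_forall fun a => hτbdd _
    refine hτXint.congr ?_
    rw [Filter.EventuallyEq, ae_iff]
    refine measure_mono_null ?_ (hnull N₂ hm₂ h0₂)
    intro a ha
    simp only [mem_setOf_eq] at ha ⊢
    by_contra hmem
    exact ha (hτeq _ hmem)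
  -- key pointwise identity (integration by parts in x₁, junk-value safe)
  have hB : ∀ x₂, ∫ x₁, (ω (x₁, x₂) * m₀ (x₁, x₂) + T₁ x₂) * f x₂ x₁ = 0 := by
    intro x₂
    have := auxB (f x₂) (hf_diff x₂) (hf_pos x₂) (hf_vanish_top x₂) (hf_vanish_bot x₂)
      (hf_density x₂) (fun t => m₀ (t, x₂)) (hm₀_diff x₂)
      (fun t => (hm₀_bdd (t, x₂)).1) (fun t => (hm₀_bdd (t, x₂)).2) (hint2 x₂)
    simp_rw [hω]
    exact this
  -- apply hX_dist to ω·m₀ + T₁∘snd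
  have hX5 : (∫ a, ω (X a) * m₀ (X a) ∂P) + ∫ a, T₁ (X a).2 ∂P = 0 := by
    have hgint : Integrable ((fun x : ℝ × E => ω x * m₀ x + T₁ x.2) ∘ X) P := by
      have : Integrable (fun a => ω (X a) * m₀ (X a) + T₁ (X a).2) P := hint4.add hT₁X
      exact this
    have happ := hX_dist (fun x : ℝ × E => ω x * m₀ x + T₁ x.2) hgint
    have hR : (fun x₂ => ∫ x₁, (ω (x₁, x₂) * m₀ (x₁, x₂) + T₁ (x₁, x₂).2) * f x₂ x₁)
        = fun _ => (0:ℝ) := by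
      funext x₂
      exact hB x₂
    rw [hR] at happ
    rw [integral_zero] at happ
    rw [← happ]
    exact (integral_add hint4 hT₁X).symm
  -- apply hX_dist to T₁∘snd
  have hX6 : ∫ a, T₁ (X a).2 ∂P = ∫ x₂, T₁ x₂ ∂ν := by
    have hgint : Integrable ((fun x : ℝ × E => T₁ x.2) ∘ X) P := hT₁X
    have happ := hX_dist (fun x : ℝ × E => T₁ x.2) hgint
    have hR : (fun x₂ => ∫ x₁, T₁ (x₁, x₂).2 * f x₂ x₁) = fun x₂ => T₁ x₂ := by
      funext x₂
      simp only
      rw [integral_const_mul, hf_density x₂, mul_one]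
    rw [hR] at happ
    exact happ
  -- conditional expectation step
  have hsm : StronglyMeasurable[MeasurableSpace.comap X inferInstance] (fun a => w (X a)) :=
    (hwm.comp (Measurable.of_comap_le le_rfl)).stronglyMeasurable
  have hwZint : Integrable (fun a => w (X a) * Z a) P :=
    hint1.congr ((hωae.symm).mul (Filter.EventuallyEq.refl _ Z))
  have hwZint' : Integrable ((fun a => w (X a)) * Z) P := hwZint
  have hpull := condExp_mul_of_stronglyMeasurable_left hsm hwZint' hZint
  have hchain : ∫ a, ω (X a) * Z a ∂P = ∫ a, ω (X a) * m₀ (X a) ∂P := by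
    have e1 : ∫ a, ω (X a) * Z a ∂P = ∫ a, w (X a) * Z a ∂P :=
      (integral_congr_ae (hωae.mul (Filter.EventuallyEq.refl _ Z))).symm
    have e2 : ∫ a, w (X a) * Z a ∂P
        = ∫ a, (P[(fun a => w (X a)) * Z | MeasurableSpace.comap X inferInstance]) a ∂P :=
      (integral_condExp hm).symm
    have e3 : ∫ a, (P[(fun a => w (X a)) * Z | MeasurableSpace.comap X inferInstance]) a ∂P
        = ∫ a, ((fun a => w (X a)) * (P[Z | MeasurableSpace.comap X inferInstance])) a ∂P :=
      integral_congr_ae hpull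
    have e4 : ∫ a, ((fun a => w (X a)) * (P[Z | MeasurableSpace.comap X inferInstance])) a ∂P
        = ∫ a, w (X a) * m₀ (X a) ∂P := by
      refine integral_congr_ae ?_
      have := (Filter.EventuallyEq.refl (ae P) (fun a => w (X a))).mul hcond
      exact this
    have e5 : ∫ a, w (X a) * m₀ (X a) ∂P = ∫ a, ω (X a) * m₀ (X a) ∂P :=
      integral_congr_ae (hωae.mul (Filter.EventuallyEq.refl _ _))
    rw [e1, e2, e3, e4, e5]
  -- conclusion
  have hgoal : ∫ x₂, T₁ x₂ ∂ν = - ∫ a, ω (X a) * Z a ∂P := by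
    rw [hchain, ← hX6]
    linarith
  exact hgoal
end

section
/- (UQPE representation, Corollary 1 of Firpo-Fortin-Lemieux.) Suppose $F^\varepsilon_Y$ is a family of CDFs with $F^0_Y = F_Y$, $F^\varepsilon_Y(y)$ differentiable in $\varepsilon$ at $\varepsilon=0$ with derivative $\theta(y)$ continuous in $y$, $F_Y$ has a continuous positive density $f_Y$ in a neighborhood of its $\tau$-quantile $q_\tau$, and $(\varepsilon,y) \mapsto F^\varepsilon_Y(y)$ is continuously differentiable near $(0,q_\tau)$. Then the quantile function $\varepsilon \mapsto Q_\tau(F^\varepsilon_Y)$ is differentiable at $\varepsilon = 0$ and $\frac{\partial Q_\tau(F^\varepsilon_Y)}{\partial \varepsilon}\Big|_{\varepsilon=0} = -\frac{\theta(q_\tau)}{f_Y(q_\tau)}$. -/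
open Filter

/-- UQPE representation; Corollary 1 of Firpo–Fortin–Lemieux.
`F ε y = F^ε_Y(y)` is a family of CDFs; `F 0 = F_Y`; `F · y` is differentiable
in `ε` at `0` with derivative `θ y`, continuous in `y`; `F 0` has a continuous
positive density `f_Y` near its `τ`-quantile `q_τ` (with `F 0 q_τ = τ`); and
`(ε, y) ↦ F ε y` is `C¹` near `(0, q_τ)`.  Then the quantile function
`ε ↦ Q_τ(F^ε_Y) = inf {y : τ ≤ F ε y}` is differentiable at `ε = 0` with
derivative `-θ(q_τ) / f_Y(q_τ)`. -/
theorem uqpe_representation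
    (F : ℝ → ℝ → ℝ) (θ fY : ℝ → ℝ) (τ qτ : ℝ)
    (hτ : τ ∈ Set.Ioo (0 : ℝ) 1)
    -- each F ε is a CDF
    (hCDF_mono : ∀ ε, Monotone (F ε))
    (hCDF_range : ∀ ε y, 0 ≤ F ε y ∧ F ε y ≤ 1)
    -- qτ is the τ-quantile of F 0, i.e. F 0 q_τ = τ
    (hqτ : F 0 qτ = τ)
    (hqτ_inf : qτ = sInf {y : ℝ | τ ≤ F 0 y})
    -- differentiability in ε at 0, with derivative θ(y) continuous in y
    (hθ : ∀ y, HasDerivAt (fun ε => F ε y) (θ y) 0)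
    (hθ_cont : Continuous θ)
    -- continuous positive density of F 0 in a neighborhood of q_τ
    (hfY : ∀ᶠ y in nhds qτ, HasDerivAt (F 0) (fY y) y)
    (hfY_cont : ContinuousAt fY qτ)
    (hfY_pos : 0 < fY qτ)
    -- joint continuous differentiability near (0, q_τ)
    (hC1 : ContDiffAt ℝ 1 (fun p : ℝ × ℝ => F p.1 p.2) (0, qτ)) :
    HasDerivAt (fun ε : ℝ => sInf {y : ℝ | τ ≤ F ε y}) (-(θ qτ) / fY qτ) 0 := by
  classical
  obtain ⟨L, u, hu_nhds, hL_cont, hL⟩ := contDiffAt_one_iff.mp hC1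
  set Fj : ℝ × ℝ → ℝ := fun p => F p.1 p.2 with hFj_def
  have hqτu : ((0 : ℝ), qτ) ∈ u := mem_of_mem_nhds hu_nhds
  have hFj0 : HasFDerivAt Fj (L (0, qτ)) (0, qτ) := hL _ hqτu
  set a := θ qτ with ha_def
  set b := fY qτ with hb_def
  have hb : b ≠ 0 := ne_of_gt hfY_pos
  -- partial derivatives of Fj at (0, qτ)
  have hι1 : HasDerivAt (fun ε : ℝ => (ε, qτ)) (((1:ℝ), (0:ℝ))) 0 :=
    (hasDerivAt_id 0).prodMk (hasDerivAt_const 0 qτ)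
  have hL10 : L (0, qτ) (1, 0) = a := by
    have h1 : HasDerivAt (fun ε : ℝ => F ε qτ) (L (0, qτ) (1, 0)) 0 :=
      hFj0.comp_hasDerivAt (f := fun ε : ℝ => (ε, qτ)) 0 hι1
    exact h1.unique (hθ qτ)
  have hι2 : HasDerivAt (fun y : ℝ => ((0:ℝ), y)) (((0:ℝ), (1:ℝ))) qτ :=
    (hasDerivAt_const qτ 0).prodMk (hasDerivAt_id qτ)
  have hL01 : L (0, qτ) (0, 1) = b := by
    have h1 : HasDerivAt (fun y : ℝ => F 0 y) (L (0, qτ) (0, 1)) qτ :=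
      hFj0.comp_hasDerivAt (f := fun y : ℝ => ((0:ℝ), y)) qτ hι2
    exact h1.unique hfY.self_of_nhds
  have hL0 : ∀ x y : ℝ, L (0, qτ) (x, y) = a * x + b * y := by
    intro x y
    have hxy : (x, y) = x • ((1:ℝ), (0:ℝ)) + y • ((0:ℝ), (1:ℝ)) := by
      simp [Prod.ext_iff]
    rw [hxy, map_add, map_smul, map_smul, hL10, hL01, smul_eq_mul, smul_eq_mul]
    ring
  -- the derivative of (ε, y) ↦ (ε, F ε y) as a continuous linear equivalence
  set M : ℝ × ℝ →L[ℝ] ℝ × ℝ := (ContinuousLinearMap.fst ℝ ℝ ℝ).prod (L (0, qτ)) with hM_def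
  set N : ℝ × ℝ →L[ℝ] ℝ × ℝ :=
    (ContinuousLinearMap.fst ℝ ℝ ℝ).prod
      (b⁻¹ • (ContinuousLinearMap.snd ℝ ℝ ℝ - a • ContinuousLinearMap.fst ℝ ℝ ℝ)) with hN_def
  have hMapp : ∀ p : ℝ × ℝ, M p = (p.1, a * p.1 + b * p.2) := by
    rintro ⟨x, y⟩
    simp [hM_def, hL0]
  have hNapp : ∀ p : ℝ × ℝ, N p = (p.1, b⁻¹ * (p.2 - a * p.1)) := by
    rintro ⟨x, y⟩
    simp [hN_def]
  have hMN : Function.LeftInverse N M := by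
    rintro ⟨x, y⟩
    rw [hMapp, hNapp]
    field_simp
    congr 1
    rw [div_eq_iff hb]
    ring
  have hNM : Function.RightInverse N M := by
    rintro ⟨x, y⟩
    rw [hNapp, hMapp]
    field_simp
    congr 1
    ring
  set E := ContinuousLinearEquiv.equivOfInverse M N hMN hNM with hE_def
  have hE_coe : (E : ℝ × ℝ →L[ℝ] ℝ × ℝ) = M := rfl
  -- strict derivative of the joint map fj
  set fj : ℝ × ℝ → ℝ × ℝ := fun p => (p.1, F p.1 p.2) with hfj_def
  have hFjstrict : HasStrictFDerivAt Fj (L (0, qτ)) (0, qτ) :=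
    hC1.hasStrictFDerivAt' hFj0 one_ne_zero
  have hfj : HasStrictFDerivAt fj (E : ℝ × ℝ →L[ℝ] ℝ × ℝ) (0, qτ) := by
    rw [hE_coe]
    exact hasStrictFDerivAt_fst.prodMk hFjstrict
  set g : ℝ × ℝ → ℝ × ℝ := hfj.localInverse fj E (0, qτ) with hg_def
  have hfj0 : fj (0, qτ) = ((0 : ℝ), τ) := by simp [hfj_def, hqτ]
  have hg_strict : HasStrictFDerivAt g ((E.symm : ℝ × ℝ →L[ℝ] ℝ × ℝ)) ((0 : ℝ), τ) := by
    have h := hfj.to_localInverse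
    rwa [hfj0] at h
  set φ : ℝ → ℝ := fun ε => (g (ε, τ)).2 with hφ_def
  -- derivative of φ at 0
  have hιτ : HasDerivAt (fun ε : ℝ => (ε, τ)) (((1:ℝ), (0:ℝ))) 0 :=
    (hasDerivAt_id 0).prodMk (hasDerivAt_const 0 τ)
  have hgφ : HasDerivAt (fun ε : ℝ => g (ε, τ)) (E.symm (1, 0)) 0 :=
    hg_strict.hasFDerivAt.comp_hasDerivAt (f := fun ε : ℝ => (ε, τ)) 0 hιτ
  have hφd : HasDerivAt φ ((E.symm ((1:ℝ), (0:ℝ))).2) 0 :=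
    (ContinuousLinearMap.snd ℝ ℝ ℝ).hasFDerivAt.comp_hasDerivAt (f := fun ε : ℝ => g (ε, τ)) 0 hgφ
  have hEsymm : E.symm ((1:ℝ), (0:ℝ)) = ((1 : ℝ), -a / b) := by
    have hM : M ((1:ℝ), -a / b) = ((1:ℝ), (0:ℝ)) := by
      rw [hMapp]
      field_simp
      ring
    rw [ContinuousLinearEquiv.symm_apply_eq]
    exact hM.symm
  have hφd' : HasDerivAt φ (-a / b) 0 := by
    rw [hEsymm] at hφd
    exact hφd
  -- the region where ∂F/∂y is positive
  have hcont : ContinuousAt (fun p : ℝ × ℝ => L p ((0:ℝ), (1:ℝ))) (0, qτ) :=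
    ((ContinuousLinearMap.apply ℝ ℝ (((0:ℝ), (1:ℝ)))).continuous.continuousAt).comp
      (hL_cont.continuousAt hu_nhds)
  have hbpos : 0 < L (0, qτ) ((0:ℝ), (1:ℝ)) := by rw [hL01]; exact hfY_pos
  have hpos : ∀ᶠ p : ℝ × ℝ in nhds (0, qτ), 0 < L p ((0:ℝ), (1:ℝ)) :=
    hcont.eventually (eventually_gt_nhds hbpos)
  have hmemu : ∀ᶠ p : ℝ × ℝ in nhds (0, qτ), p ∈ u := hu_nhds
  obtain ⟨δ, hδpos, hδ⟩ := Metric.eventually_nhds_iff_ball.mp (hmemu.and hpos)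
  -- below qτ, F 0 is < τ (positive slope of F 0 at qτ)
  have hslope : ∀ᶠ y in nhdsWithin qτ {y | y ≠ qτ}, 0 < slope (F 0) qτ y :=
    (hasDerivAt_iff_tendsto_slope.mp hfY.self_of_nhds).eventually
      (eventually_gt_nhds hfY_pos)
  obtain ⟨δ₂, hδ₂pos, hδ₂⟩ := Metric.mem_nhdsWithin_iff.mp hslope
  set r := min δ δ₂ with hr_def
  have hrpos : 0 < r := lt_min hδpos hδ₂pos
  set y₀ : ℝ := qτ - r / 2 with hy₀_def
  have hy₀lt : y₀ < qτ := by simp [hy₀_def]; linarith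
  have hy₀F : F 0 y₀ < τ := by
    have hmem : y₀ ∈ Metric.ball qτ δ₂ := by
      simp only [Metric.mem_ball, Real.dist_eq, hy₀_def]
      rw [abs_of_nonpos (by linarith)]
      have : r ≤ δ₂ := min_le_right _ _
      linarith
    have hne : y₀ ∈ {y : ℝ | y ≠ qτ} := ne_of_lt hy₀lt
    have hs : 0 < slope (F 0) qτ y₀ := hδ₂ ⟨hmem, hne⟩
    have hden : y₀ - qτ < 0 := by linarith
    rw [slope_def_field] at hs
    by_contra hge
    push_neg at hge
    have : (F 0 y₀ - F 0 qτ) / (y₀ - qτ) ≤ 0 := by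
      apply div_nonpos_of_nonneg_of_nonpos
      · rw [hqτ]; linarith
      · linarith
    exact absurd hs (not_lt.mpr this)
  -- the ball of radius r/2 around (0, qτ) is in the good region
  have hball : ∀ p : ℝ × ℝ, dist p ((0 : ℝ), qτ) < r / 2 → p ∈ u ∧ 0 < L p ((0:ℝ), (1:ℝ)) := by
    intro p hp
    apply hδ
    simp only [Metric.mem_ball]
    have : r ≤ δ := min_le_left _ _
    linarith
  -- eventual properties in ε near 0
  have e2 : ∀ᶠ ε : ℝ in nhds 0, F ε y₀ < τ :=
    ((hθ y₀).continuousAt).eventually (eventually_lt_nhds hy₀F)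
  have htend : Tendsto (fun ε : ℝ => ((ε : ℝ), τ)) (nhds 0) (nhds ((0 : ℝ), τ)) := by
    have : Continuous (fun ε : ℝ => ((ε : ℝ), τ)) := continuous_id.prodMk continuous_const
    exact this.continuousAt (x := (0 : ℝ))
  have e3 : ∀ᶠ ε : ℝ in nhds 0, fj (g (ε, τ)) = (ε, τ) := by
    have h := hfj.eventually_right_inverse
    rw [hfj0] at h
    exact htend.eventually h
  have hg0 : g ((0 : ℝ), τ) = ((0 : ℝ), qτ) := by
    have h := hfj.localInverse_apply_image
    rwa [hfj0] at h
  have hgc : ContinuousAt g ((0 : ℝ), τ) := by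
    have h := hfj.localInverse_continuousAt
    rwa [hfj0] at h
  have e4 : ∀ᶠ ε : ℝ in nhds 0, dist (g (ε, τ)) ((0 : ℝ), qτ) < r / 2 := by
    have h : Tendsto (fun ε : ℝ => g (ε, τ)) (nhds 0) (nhds ((0 : ℝ), qτ)) := by
      have := hgc.tendsto.comp htend
      rwa [hg0] at this
    exact h (Metric.ball_mem_nhds _ (by linarith))
  -- main eventual identity : the quantile equals φ
  have heq : (fun ε : ℝ => sInf {y : ℝ | τ ≤ F ε y}) =ᶠ[nhds 0] φ := by
    filter_upwards [e2, e3, e4] with ε h2 h3 h4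
    have hfst : (g (ε, τ)).1 = ε := by
      have := congrArg Prod.fst h3
      simpa [hfj_def] using this
    have hgp : g (ε, τ) = (ε, φ ε) := by
      rw [Prod.ext_iff]
      exact ⟨hfst, rfl⟩
    have hFφ : F ε (φ ε) = τ := by
      have := congrArg Prod.snd h3
      simp only [hfj_def] at this
      rwa [hfst] at this
    have hφmem : φ ε ∈ {y : ℝ | τ ≤ F ε y} := le_of_eq hFφ.symm
    have hφdist : dist (φ ε) qτ < r / 2 := by
      have h : dist (φ ε) qτ ≤ dist (g (ε, τ)) ((0:ℝ), qτ) := by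
        rw [Prod.dist_eq]
        exact le_max_right _ _
      exact lt_of_le_of_lt h h4
    -- φ ε is a lower bound of the set
    have hlb : ∀ z ∈ {y : ℝ | τ ≤ F ε y}, φ ε ≤ z := by
      intro z hz
      by_contra hlt
      push_neg at hlt
      rcases le_or_gt z y₀ with hzy | hzy
      · have : F ε z ≤ F ε y₀ := hCDF_mono ε hzy
        have : F ε z < τ := lt_of_le_of_lt this h2
        exact absurd hz (not_le.mpr this)
      · -- y₀ < z < φ ε : contradiction with positive density at φ ε
        have hmemball : dist ((ε, φ ε) : ℝ × ℝ) ((0 : ℝ), qτ) < r / 2 := by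
          rwa [hgp] at h4
        obtain ⟨hu', hpos'⟩ := hball _ hmemball
        set d := L (ε, φ ε) ((0:ℝ), (1:ℝ)) with hd_def
        have hdF : HasDerivAt (F ε) d (φ ε) := by
          have hc : HasDerivAt (fun y : ℝ => ((ε : ℝ), y)) (((0:ℝ), (1:ℝ))) (φ ε) :=
            (hasDerivAt_const (φ ε) ε).prodMk (hasDerivAt_id (φ ε))
          exact (hL _ hu').comp_hasDerivAt (f := fun y : ℝ => ((ε : ℝ), y)) (φ ε) hc
        have hconst : ∀ w ∈ Set.Icc z (φ ε), F ε w = τ := by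
          intro w hw
          refine le_antisymm ?_ ?_
          · calc F ε w ≤ F ε (φ ε) := hCDF_mono ε hw.2
              _ = τ := hFφ
          · calc τ ≤ F ε z := hz
              _ ≤ F ε w := hCDF_mono ε hw.1
        have hmemIcc : φ ε ∈ Set.Icc z (φ ε) := ⟨hlt.le, le_rfl⟩
        have hd0 : HasDerivWithinAt (F ε) d (Set.Icc z (φ ε)) (φ ε) :=
          hdF.hasDerivWithinAt
        have hc0 : HasDerivWithinAt (F ε) 0 (Set.Icc z (φ ε)) (φ ε) :=
          (hasDerivWithinAt_const (φ ε) _ τ).congr hconst (hconst _ hmemIcc)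
        have hdz : d = 0 :=
          (uniqueDiffOn_Icc hlt (φ ε) hmemIcc).eq_deriv _ hd0 hc0
        rw [hdz] at hpos'
        exact lt_irrefl 0 hpos'
    exact le_antisymm (csInf_le ⟨φ ε, hlb⟩ hφmem) (le_csInf ⟨φ ε, hφmem⟩ hlb)
  have : HasDerivAt (fun ε : ℝ => sInf {y : ℝ | τ ≤ F ε y}) (-a / b) 0 :=
    hφd'.congr_of_eventuallyEq heq
  simpa [ha_def, hb_def, neg_div] using this
end

section
/- Let $Y_1, \dots, Y_N$ be real numbers with order statistics $Y_{(1)} \le \cdots \le Y_{(N)}$, and let $\hat q^*_\tau = \arg\min_q \sum_{i=1}^N \rho_\tau(Y_i - q) - q \sum_{i=1}^N \eta_i(\tau - 1\{Y_i \le \hat q_\tau\})$, where $\rho_\tau(u) = u(\tau - 1\{u < 0\})$ is the check function, $\hat q_\tau$ is a fixed real number, and $\eta_1,\dots,\eta_N$ are real numbers such that $N\tau + \sum_i \eta_i(\tau - 1\{Y_i \le \hat q_\tau\})$ is not an integer and lies in $(0, N)$, and all $Y_i$ are distinct. Then $\hat q^*_\tau = Y_{(r)}$ where $r$ is the smallest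 integer with $r \ge N\tau + \sum_{i=1}^N \eta_i(\tau - 1\{Y_i \le \hat q_\tau\})$. -/
/-- the bootstrap quantile is an order statistic.
`Y 0, …, Y (N-1)` are distinct reals, sorted by the permutation `σ`
(`Y ∘ σ` strictly monotone, so `Y (σ ⟨r-1,_⟩)` is the `r`-th order statistic).
With `S = Nτ + ∑ᵢ ηᵢ (τ - 1{Yᵢ ≤ q̂_τ})` not an integer and `0 < S < N`, the
minimizer of `q ↦ ∑ᵢ ρ_τ(Yᵢ - q) - q ∑ᵢ ηᵢ (τ - 1{Yᵢ ≤ q̂_τ})` (with check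
function `ρ_τ(u) = u (τ - 1{u < 0})`) is exactly the `r`-th order statistic,
where `r` is the smallest integer with `r ≥ S`. -/
theorem bootstrap_quantile_order_statistic
    (N : ℕ) (hN : 0 < N)
    (Y : Fin N → ℝ) (hY_inj : Function.Injective Y)
    (σ : Equiv.Perm (Fin N)) (hσ : StrictMono (Y ∘ σ))
    (η : Fin N → ℝ) (qhat : ℝ) (τ : ℝ) (hτ : τ ∈ Set.Ioo (0 : ℝ) 1)
    (S : ℝ)
    (hS : S = N * τ + ∑ i, η i * (τ - if Y i ≤ qhat then 1 else 0))
    (hS_not_int : ¬ ∃ k : ℤ, S = k)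
    (hS_range : 0 < S ∧ S < N)
    (r : ℕ) (hr_ge : S ≤ r) (hr_min : (r : ℝ) - 1 < S)
    (hr_pos : 1 ≤ r) (hr_le : r ≤ N) :
    {q : ℝ | ∀ q' : ℝ,
        (∑ i, (Y i - q) * (τ - if Y i - q < 0 then 1 else 0))
          - q * (∑ i, η i * (τ - if Y i ≤ qhat then 1 else 0))
        ≤ (∑ i, (Y i - q') * (τ - if Y i - q' < 0 then 1 else 0))
          - q' * (∑ i, η i * (τ - if Y i ≤ qhat then 1 else 0))}
      = {Y (σ ⟨r - 1, by omega⟩)} := by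
  have hS_lt_r : S < r := lt_of_le_of_ne hr_ge (fun h => hS_not_int ⟨r, by exact_mod_cast h⟩)
  set k : Fin N := ⟨r - 1, by omega⟩ with hk
  set a : ℝ := Y (σ k) with ha
  set E : ℝ := ∑ i, η i * (τ - if Y i ≤ qhat then 1 else 0) with hE
  -- rewrite the check-function objective
  have hρ : ∀ (y q : ℝ), (y - q) * (τ - if y - q < 0 then 1 else 0)
      = τ * (y - q) + max (q - y) 0 := by
    intro y q
    split_ifs with h
    · rw [max_eq_left (by linarith)]; ring
    · rw [max_eq_right (by linarith)]; ring
  have hf : ∀ q : ℝ, (∑ i, (Y i - q) * (τ - if Y i - q < 0 then 1 else 0)) - q * E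
      = τ * (∑ i, Y i) + ((∑ i, max (q - Y i) 0) - S * q) := by
    intro q
    have h1 : ∑ i, (Y i - q) * (τ - if Y i - q < 0 then 1 else 0)
        = ∑ i, (τ * (Y i - q) + max (q - Y i) 0) :=
      Finset.sum_congr rfl (fun i _ => hρ _ _)
    have h2 : ∑ i : Fin N, (τ * (Y i - q) + max (q - Y i) 0)
        = τ * (∑ i, Y i) - N * (τ * q) + ∑ i, max (q - Y i) 0 := by
      rw [Finset.sum_add_distrib]
      congr 1
      simp [mul_sub, Finset.sum_sub_distrib, ← Finset.mul_sum, mul_comm, mul_left_comm]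
    rw [h1, h2, hS]
    ring
  -- counting lemmas
  have hcount : ∀ (p : Fin N → Prop) [DecidablePred p],
      (Finset.univ.filter p).card = (Finset.univ.filter (fun j => p (σ j))).card := by
    intro p _
    calc (Finset.univ.filter p).card = Fintype.card {i // p i} :=
          (Fintype.card_subtype p).symm
      _ = Fintype.card {j // p (σ j)} :=
          Fintype.card_congr (Equiv.subtypeEquiv σ (fun j => Iff.rfl)).symm
      _ = (Finset.univ.filter (fun j => p (σ j))).card := Fintype.card_subtype _
  have hYle : ∀ j : Fin N, (Y (σ j) ≤ a ↔ j ≤ k) := fun j => hσ.le_iff_le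
  have hYlt : ∀ j : Fin N, (Y (σ j) < a ↔ j < k) := fun j => hσ.lt_iff_lt
  have hcard_le : ((Finset.univ.filter (fun i => Y i ≤ a)).card : ℝ) = r := by
    rw [hcount]
    rw [show (Finset.univ.filter (fun j => Y (σ j) ≤ a)) = Finset.Iic k by
      ext j; simp [hYle j]]
    rw [Fin.card_Iic]
    have hkv : (k : ℕ) = r - 1 := rfl
    rw [hkv, Nat.cast_add, Nat.cast_sub hr_pos]
    push_cast
    ring
  have hcard_lt : ((Finset.univ.filter (fun i => Y i < a)).card : ℝ) = (r : ℝ) - 1 := by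
    rw [hcount]
    rw [show (Finset.univ.filter (fun j => Y (σ j) < a)) = Finset.Iio k by
      ext j; simp [hYlt j]]
    rw [Fin.card_Iio]
    have hkv : (k : ℕ) = r - 1 := rfl
    rw [hkv, Nat.cast_sub hr_pos]
    push_cast
    ring
  -- strict minimality of a
  have hmin : ∀ q' : ℝ, a ≠ q' →
      ((∑ i, max (a - Y i) 0) - S * a) < ((∑ i, max (q' - Y i) 0) - S * q') := by
    intro q' hne
    rcases lt_or_gt_of_ne hne with h | h
    · -- a < q'
      have hterm : ∀ i : Fin N, (if Y i ≤ a then q' - a else 0)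
          ≤ max (q' - Y i) 0 - max (a - Y i) 0 := by
        intro i
        split_ifs with hi
        · rw [show max (q' - Y i) 0 = q' - Y i from max_eq_left (by linarith),
            show max (a - Y i) 0 = a - Y i from max_eq_left (by linarith)]
          linarith
        · rw [show max (a - Y i) 0 = 0 from max_eq_right (by linarith)]
          have := le_max_right (q' - Y i) 0
          linarith
      have hsum : ∑ i, (if Y i ≤ a then q' - a else 0)
          ≤ ∑ i, (max (q' - Y i) 0 - max (a - Y i) 0) :=
        Finset.sum_le_sum (fun i _ => hterm i)
      rw [← Finset.sum_filter] at hsum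
      rw [Finset.sum_const, nsmul_eq_mul, Finset.sum_sub_distrib] at hsum
      rw [hcard_le] at hsum
      nlinarith [hsum, hS_lt_r, h]
    · -- q' < a
      have hterm : ∀ i : Fin N, (if Y i < a then q' - a else 0)
          ≤ max (q' - Y i) 0 - max (a - Y i) 0 := by
        intro i
        split_ifs with hi
        · rw [show max (a - Y i) 0 = a - Y i from max_eq_left (by linarith)]
          have := le_max_left (q' - Y i) 0
          linarith
        · rw [show max (q' - Y i) 0 = 0 from max_eq_right (by linarith),
            show max (a - Y i) 0 = 0 from max_eq_right (by linarith)]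
          linarith
      have hsum : ∑ i, (if Y i < a then q' - a else 0)
          ≤ ∑ i, (max (q' - Y i) 0 - max (a - Y i) 0) :=
        Finset.sum_le_sum (fun i _ => hterm i)
      rw [← Finset.sum_filter] at hsum
      rw [Finset.sum_const, nsmul_eq_mul, Finset.sum_sub_distrib] at hsum
      rw [hcard_lt] at hsum
      nlinarith [hsum, hr_min, h]
  -- conclude
  ext q
  simp only [Set.mem_setOf_eq, Set.mem_singleton_iff]
  constructor
  · intro hq
    by_contra hne
    have h1 := hq a
    rw [hf q, hf a] at h1
    have h2 := hmin q (fun h => hne h.symm)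
    linarith
  · intro hq
    subst hq
    intro q'
    rw [hf, hf]
    rcases eq_or_ne a q' with h | h
    · rw [h]
    · linarith [hmin q' h]
end
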